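/- Let G be a (2P_2, \overline{P_2+P_3})-free atom containing an induced 5-cycle on vertices v_1,…,v_5. Then for every i ∈ {1,…,5} (indices modulo 5), the sets V_{{i}}, V_{{i,i+1}} and V_{{i-1,i,i+1}} are all empty; equivalently, no vertex x outside {v_1,…,v_5} satisfies N(x) ∩ {v_1,…,v_5} = {v_i}, {v_i, v_{i+1}} or {v_{i-1}, v_i, v_{i+1}}. -/

import Mathlib

open SimpleGraph

/-- The graph `2P₂`: two disjoint edges, on vertex set `Fin 4`. -/
def twoP2 : SimpleGraph (Fin 4) :=
  SimpleGraph.fromRel (fun a b => (a = 0 ∧ b = 1) ∨ (a = 2 ∧ b = 3))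

/-- The graph `P₂ + P₃`: disjoint union of a path on 2 vertices (0-1)
and a path on 3 vertices (2-3-4), on vertex set `Fin 5`. -/
def P2P3 : SimpleGraph (Fin 5) :=
  SimpleGraph.fromRel (fun a b => (a = 0 ∧ b = 1) ∨ (a = 2 ∧ b = 3) ∨ (a = 3 ∧ b = 4))

/-- `G` is `H`-free: `G` contains no induced subgraph isomorphic to `H`. -/
def Free {W V : Type*} (H : SimpleGraph W) (G : SimpleGraph V) : Prop :=
  IsEmpty (H ↪g G)

/-- `G` has no clique cut-set: for every clique `K`, deleting the vertices of `K`
does not disconnect the graph.  A graph with this property is called an atom. -/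
def NoCliqueCutset {V : Type*} (G : SimpleGraph V) : Prop :=
  ∀ K : Set V, G.IsClique K → (G.induce (Kᶜ : Set V)).Preconnected

/-- For `S ⊆ Fin 5`, the set of vertices `x` outside the cycle `v 0, …, v 4` whose
neighbourhood on the cycle is exactly `{v i : i ∈ S}`. -/
def vSet {V : Type*} (G : SimpleGraph V) (v : Fin 5 → V) (S : Set (Fin 5)) : Set V :=
  {x | (∀ i, x ≠ v i) ∧ ∀ i, (G.Adj x (v i) ↔ i ∈ S)}

/-- If `G` contains four distinct vertices inducing two disjoint edges, then `G`
is not `2P₂`-free. -/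
lemma no_induced_2P2 {V : Type*} (G : SimpleGraph V) (h : _root_.Free twoP2 G)
    (a b c d : V) (hab : G.Adj a b) (hcd : G.Adj c d)
    (hac : ¬G.Adj a c) (had : ¬G.Adj a d) (hbc : ¬G.Adj b c) (hbd : ¬G.Adj b d)
    (nac : a ≠ c) (nad : a ≠ d) (nbc : b ≠ c) (nbd : b ≠ d) : False := by
  have nab : a ≠ b := hab.ne
  have ncd : c ≠ d := hcd.ne
  have hba : G.Adj b a := hab.symm
  have hdc : G.Adj d c := hcd.symm
  have hca : ¬G.Adj c a := fun h' => hac h'.symm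
  have hda : ¬G.Adj d a := fun h' => had h'.symm
  have hcb : ¬G.Adj c b := fun h' => hbc h'.symm
  have hdb : ¬G.Adj d b := fun h' => hbd h'.symm
  let f : Fin 4 → V := ![a, b, c, d]
  have finj : Function.Injective f := by
    intro p q hpq
    fin_cases p <;> fin_cases q <;>
      simp_all [f, nab, nac, nad, nbc, nbd, ncd, nab.symm, nac.symm, nad.symm,
        nbc.symm, nbd.symm, ncd.symm]
  have e : twoP2 ↪g G := by
    refine ⟨⟨f, finj⟩, ?_⟩
    intro p q
    fin_cases p <;> fin_cases q <;>
      simp_all [f, twoP2, hab, hcd, hba, hdc]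
  exact h.false e

theorem clm_C5_V1_V12_V123_empty {V : Type*} [Fintype V] (G : SimpleGraph V)
    (hfree1 : _root_.Free twoP2 G) (hfree2 : _root_.Free (P2P3ᶜ) G)
    (hatom : NoCliqueCutset G)
    (v : Fin 5 → V) (hv : Function.Injective v)
    (hC : ∀ i j : Fin 5, G.Adj (v i) (v j) ↔ (j = i + 1 ∨ i = j + 1)) :
    ∀ i : Fin 5, vSet G v {i} = ∅ ∧ vSet G v {i, i + 1} = ∅ ∧
      vSet G v {i - 1, i, i + 1} = ∅ := by
  intro i
  have fin5i : i + 2 ≠ i ∧ i + 2 ≠ i + 1 ∧ i + 2 ≠ i - 1 ∧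
      i + 3 ≠ i ∧ i + 3 ≠ i + 1 ∧ i + 3 ≠ i - 1 := by revert i; decide
  -- generic: if x is adjacent to v i but not to v (i+2), v (i+3), we get a 2P₂
  have key : ∀ x : V, (∀ j, x ≠ v j) → G.Adj x (v i) →
      ¬G.Adj x (v (i + 2)) → ¬G.Adj x (v (i + 3)) → False := by
    intro x hne hxi hx2 hx3
    have facts : ∀ j : Fin 5, ¬(j + 3 = j + 2 + 1 + 1 ∨ j + 2 = j + 3 + 1) ∧
        ¬(j + 2 = j + 1 ∨ j = j + 2 + 1) ∧ ¬(j + 3 = j + 1 ∨ j = j + 3 + 1) ∧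
        j + 3 = j + 2 + 1 := by decide
    have hcd : G.Adj (v (i + 2)) (v (i + 3)) :=
      (hC (i + 2) (i + 3)).mpr (Or.inl (facts i).2.2.2)
    have hic2 : ¬G.Adj (v i) (v (i + 2)) := by
      rw [hC]; exact fun h => (facts i).2.1 (by tauto)
    have hic3 : ¬G.Adj (v i) (v (i + 3)) := by
      rw [hC]; exact fun h => (facts i).2.2.1 (by tauto)
    exact no_induced_2P2 G hfree1 x (v i) (v (i + 2)) (v (i + 3)) hxi hcd hx2 hx3
      hic2 hic3 (hne _) (hne _) (fun h => fin5i.1 (hv h).symm)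
      (fun h => fin5i.2.2.2.1 (hv h).symm)
  refine ⟨?_, ?_, ?_⟩ <;> rw [Set.eq_empty_iff_forall_notMem] <;>
    rintro x ⟨hne, hadj⟩
  · refine key x hne ((hadj i).mpr rfl) ?_ ?_
    · intro h
      have := (hadj _).mp h
      exact fin5i.1 this
    · intro h
      have := (hadj _).mp h
      exact fin5i.2.2.2.1 this
  · refine key x hne ((hadj i).mpr (Or.inl rfl)) ?_ ?_
    · intro h
      have := (hadj _).mp h
      rcases this with h' | h'
      · exact fin5i.1 h'
      · exact fin5i.2.1 h'
    · intro h
      have := (hadj _).mp h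
      rcases this with h' | h'
      · exact fin5i.2.2.2.1 h'
      · exact fin5i.2.2.2.2.1 h'
  · refine key x hne ((hadj i).mpr (Or.inr (Or.inl rfl))) ?_ ?_
    · intro h
      have := (hadj _).mp h
      rcases this with h' | h' | h'
      · exact fin5i.2.2.1 h'
      · exact fin5i.1 h'
      · exact fin5i.2.1 h'
    · intro h
      have := (hadj _).mp h
      rcases this with h' | h' | h'
      · exact fin5i.2.2.2.2.2 h'
      · exact fin5i.2.2.2.1 h'
      · exact fin5i.2.2.2.2.1 h'
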